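/- The family R_1 is a D_n^ℤ-basic-separator set: every K ∈ R_1 is a regular language with K ∩ D_n^ℤ = ∅, and every regular language L ⊆ Σ_n^* with L ∩ D_n^ℤ = ∅ is contained in a finite union of members of R_1. -/

import Mathlib

set_option linter.unusedVariables false

/-! ### Alphabet, effects, Dyck languages -/

abbrev Sig (n : ℕ) := Fin n × Bool

def letterEff {n : ℕ} (a : Sig n) : Fin n → ℤ :=
  fun j => if j = a.1 then (if a.2 then 1 else -1) else 0

def wordEff {n : ℕ} (w : List (Sig n)) : Fin n → ℤ :=
  (w.map letterEff).sum

/-- The Dyck language `D_n`. -/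
def Dyck (n : ℕ) : Language (Sig n) :=
  {w | wordEff w = 0 ∧ ∀ u, u <+: w → ∀ j, 0 ≤ wordEff u j}

/-- The coverability Dyck language `D_n^↑`. -/
def CovDyck (n : ℕ) : Language (Sig n) :=
  {w | ∀ u, u <+: w → ∀ j, 0 ≤ wordEff u j}

/-- The `ℤ`-Dyck language `D_n^ℤ`. -/
def ZDyck (n : ℕ) : Language (Sig n) :=
  {w | wordEff w = 0}

/-! ### VASS -/

structure VASS (A : Type) where
  Q : Type
  C : Type
  finQ : Finite Q
  finC : Finite C
  E : Set (Q × Option A × (C → ℤ) × Q)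
  finE : E.Finite

inductive VASS.NRun {A : Type} (V : VASS A) :
    (V.Q × (V.C → ℕ)) → List A → (V.Q × (V.C → ℕ)) → Prop
  | refl (cfg : V.Q × (V.C → ℕ)) : VASS.NRun V cfg [] cfg
  | step {q : V.Q} {c : V.C → ℕ} {a : Option A} {d : V.C → ℤ} {q' : V.Q}
      {c' : V.C → ℕ} {w : List A} {last : V.Q × (V.C → ℕ)} :
      (q, a, d, q') ∈ V.E →
      (∀ j, (c' j : ℤ) = (c j : ℤ) + d j) →
      VASS.NRun V (q', c') w last →
      VASS.NRun V (q, c) (a.toList ++ w) last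

/-- An initialized VASS: generalized initial/final configurations,
with `none` playing the role of `ω`. -/
structure InitVASS (A : Type) extends VASS A where
  qin : Q
  qout : Q
  cin : C → Option ℕ
  cout : C → Option ℕ

/-- The reachability language of an initialized VASS. -/
def InitVASS.lang {A : Type} (V : InitVASS A) : Language A :=
  {w | ∃ c0 cl : V.C → ℕ,
      V.toVASS.NRun (V.qin, c0) w (V.qout, cl) ∧
      (∀ j m, V.cin j = some m → c0 j = m) ∧
      (∀ j m, V.cout j = some m → cl j = m)}

/-! ### Transducers -/

structure Transducer (G A : Type) where
  Q : Type
  finQ : Finite Q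
  start : Q
  accept : Set Q
  trans : Set (Q × (Option G × Option A) × Q)
  finT : trans.Finite

inductive Transducer.Path {G A : Type} (T : Transducer G A) :
    T.Q → List G → List A → T.Q → Prop
  | refl (q : T.Q) : Transducer.Path T q [] [] q
  | step {q q' qf : T.Q} {g : Option G} {a : Option A} {u : List G} {v : List A} :
      (q, (g, a), q') ∈ T.trans →
      Transducer.Path T q' u v qf →
      Transducer.Path T q (g.toList ++ u) (a.toList ++ v) qf

/-- The relation recognized by a transducer. -/
def Transducer.rel {G A : Type} (T : Transducer G A) (u : List G) (v : List A) : Prop :=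
  ∃ qf ∈ T.accept, T.Path T.start u v qf

/-- `T⁻¹(L)`. -/
def Transducer.invImage {G A : Type} (T : Transducer G A) (L : Language A) : Language G :=
  {u | ∃ v ∈ L, T.rel u v}

/-! ### Regular separability -/

def RegSep {A : Type} (L1 L2 : Language A) : Prop :=
  ∃ R : Language A, R.IsRegular ∧ L1 ≤ R ∧ ∀ w ∈ R, w ∉ L2

/-! ### Linear sets and regular approximations -/

structure LinSet (n : ℕ) where
  base : Fin n → ℤ
  periods : Set (Fin n → ℤ)
  finP : periods.Finite

def LinSet.toSet {n : ℕ} (L : LinSet n) : Set (Fin n → ℤ) :=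
  {x | ∃ p ∈ AddSubmonoid.closure L.periods, x = L.base + p}

def inBox {n : ℕ} (k : ℕ) (x : Fin n → ℤ) : Prop :=
  ∀ j, -(k : ℤ) ≤ x j ∧ x j ≤ (k : ℤ)

/-- Reachability in the ε-NFA underlying the `k`-th regular approximation of `L`:
states are vectors in `[-k,k]^n`, letters move by their effect, ε-transitions
subtract a period. -/
inductive KReach {n : ℕ} (L : LinSet n) (k : ℕ) :
    (Fin n → ℤ) → List (Sig n) → (Fin n → ℤ) → Prop
  | refl (x : Fin n → ℤ) (h : inBox k x) : KReach L k x [] x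
  | letter {x y : Fin n → ℤ} {w : List (Sig n)} (a : Sig n)
      (h : inBox k x) (h' : inBox k (x + letterEff a)) :
      KReach L k (x + letterEff a) w y → KReach L k x (a :: w) y
  | eps {x y : Fin n → ℤ} {w : List (Sig n)} {p : Fin n → ℤ}
      (hp : p ∈ L.periods) (h : inBox k x) (h' : inBox k (x - p)) :
      KReach L k (x - p) w y → KReach L k x w y

/-- The `k`-th regular approximation `K^k(L)`. -/
def KApprox {n : ℕ} (L : LinSet n) (k : ℕ) : Language (Sig n) :=
  {w | ∃ y, KReach L k 0 w y ∧ y ∈ L.toSet}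

/-! ### The `⊕⁺` operation and the families `R_ℓ` -/

def posPlus {n : ℕ} (K L : Set (Fin n → ℤ)) : Set (Fin n → ℤ) :=
  {x | (∀ j, 0 ≤ x j) ∧ ∃ a ∈ K, (∀ j, 0 ≤ a j) ∧ ∃ b ∈ L, x = a + b}

def posFoldAux {n : ℕ} : Set (Fin n → ℤ) → List (Set (Fin n → ℤ)) → Set (Fin n → ℤ)
  | S, [] => S
  | S, L :: Ls => posFoldAux (posPlus S L) Ls

/-- `posFold [L₁, …, L_ℓ] = L₁ ⊕⁺ ⋯ ⊕⁺ L_ℓ` (associated to the left); for `ℓ = 1`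
it is `L₁` itself. -/
def posFold {n : ℕ} : List (Set (Fin n → ℤ)) → Set (Fin n → ℤ)
  | [] => ∅
  | L :: Ls => posFoldAux L Ls

/-- The family `R_ℓ`. -/
def RFam (n ℓ : ℕ) : Set (Language (Sig n)) :=
  {K | ∃ (k : ℕ) (Ls : List (LinSet n)), Ls.length = ℓ ∧
      (0 : Fin n → ℤ) ∉ posFold (Ls.map LinSet.toSet) ∧
      K = (Ls.map (fun L => KApprox L k)).prod}

/-- `R_{≤ m} = ⋃_{1 ≤ i ≤ m} R_i`. -/
def RleFam (n m : ℕ) : Set (Language (Sig n)) :=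
  ⋃ i ∈ Set.Icc 1 m, RFam n i

/-- `R = ⋃_{ℓ ≥ 1} R_ℓ`. -/
def RAll (n : ℕ) : Set (Language (Sig n)) :=
  ⋃ i ∈ Set.Ici 1, RFam n i

/-! ### Basic separator sets -/

def IsBasicSepSet {n : ℕ} (S : Language (Sig n)) (B : Set (Language (Sig n))) : Prop :=
  (∀ K ∈ B, K.IsRegular ∧ ∀ w ∈ K, w ∉ S) ∧
  (∀ L : Language (Sig n), L.IsRegular → (∀ w ∈ L, w ∉ S) →
    ∃ F ⊆ B, F.Finite ∧ ∀ w ∈ L, ∃ K ∈ F, w ∈ K)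

/-! Extra defs for specific statements -/

/-- `u ∼_A v`: the words induce the same state transformation in the DFA `M`. -/
def simEq {α σ : Type} (M : DFA α σ) (u v : List α) : Prop :=
  ∀ p : σ, M.evalFrom p u = M.evalFrom p v

/-- Assemble `w₀ m₁ w₁ ⋯ m_k w_k` over `Σ ⊎ Σ#` (`Sum.inl` = plain, `Sum.inr` = marked). -/
def assemble {α : Type} : List (List α) → List α → List (α ⊕ α)
  | [], _ => []
  | w :: _, [] => w.map Sum.inl
  | w :: ws, m :: ms => w.map Sum.inl ++ Sum.inr m :: assemble ws ms

/-- The set of effects of a language. -/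
def effSet {n : ℕ} (L : Language (Sig n)) : Set (Fin n → ℤ) :=
  {v | ∃ w ∈ L, wordEff w = v}

/-- `Mod(μ, v)`. -/
def ModLang (n μ : ℕ) (v : Fin n → ℤ) : Language (Sig n) :=
  {w | ∀ j, wordEff w j ≡ v j [ZMOD (μ : ℤ)]}

/-- `ModSet(μ, v)`: base `v`, periods `{±μ·e_i}`. -/
def ModSet (n μ : ℕ) (v : Fin n → ℤ) : LinSet n where
  base := v
  periods := (Set.range fun i : Fin n => (μ : ℤ) • Pi.single i (1 : ℤ)) ∪
    (Set.range fun i : Fin n => -((μ : ℤ) • Pi.single i (1 : ℤ)))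
  finP := (Set.finite_range _).union (Set.finite_range _)

/-- `Cov(k, i)`. -/
def CovLang (n k : ℕ) (i : Fin n) : Language (Sig n) :=
  {x | ∃ w w', x = w ++ w' ∧ wordEff w i < 0 ∧
      ∀ u, u <+: w → u ≠ w → 0 ≤ wordEff u i ∧ wordEff u i ≤ (k : ℤ)}

/-- `L_{neg,i}`: base `-e_i`, periods `{±e_j : j ≠ i}`. -/
def LNeg (n : ℕ) (i : Fin n) : LinSet n where
  base := -Pi.single i 1
  periods := ((fun j : Fin n => Pi.single j (1 : ℤ)) '' {j | j ≠ i}) ∪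
    ((fun j : Fin n => -Pi.single j (1 : ℤ)) '' {j | j ≠ i})
  finP := ((Set.toFinite _).image _).union ((Set.toFinite _).image _)

/-- `Z`: base `0`, periods `{±e_j}`. -/
def ZSet (n : ℕ) : LinSet n where
  base := 0
  periods := (Set.range fun j : Fin n => Pi.single j (1 : ℤ)) ∪
    (Set.range fun j : Fin n => -Pi.single j (1 : ℤ))
  finP := (Set.finite_range _).union (Set.finite_range _)

/-! The language `C_ℓ` over `Σ₂` -/

def ltrA1 : Sig 2 := (0, true)
def ltrA2 : Sig 2 := (1, true)
def ltrB1 : Sig 2 := (0, false)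
def ltrB2 : Sig 2 := (1, false)

def fwdWord (j : ℕ) : List (Sig 2) := ltrA1 :: List.replicate j ltrA2
def bwdWord (j : ℕ) : List (Sig 2) := ltrB1 :: List.replicate j ltrB2

def segLang (j : ℕ) : Language (Sig 2) :=
  KStar.kstar ({fwdWord j, bwdWord j} : Language (Sig 2))

def aPlusLang : Language (Sig 2) :=
  {w | ∃ m : ℕ, 0 < m ∧ w = List.replicate m ltrA1}

def CLang (ℓ : ℕ) : Language (Sig 2) :=
  aPlusLang * ((List.range ℓ).map (fun j => segLang (j + 1))).prod

section AuxBasic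

open Classical

variable {n : ℕ}

lemma wordEff_nil : wordEff ([] : List (Sig n)) = 0 := rfl

lemma wordEff_cons (a : Sig n) (w : List (Sig n)) :
    wordEff (a :: w) = letterEff a + wordEff w := by
  simp [wordEff]

lemma wordEff_append (u v : List (Sig n)) :
    wordEff (u ++ v) = wordEff u + wordEff v := by
  simp [wordEff]

lemma abs_letterEff_le (a : Sig n) (j : Fin n) : |letterEff a j| ≤ 1 := by
  unfold letterEff
  split_ifs <;> simp

lemma abs_wordEff_le (w : List (Sig n)) (j : Fin n) :
    |wordEff w j| ≤ (w.length : ℤ) := by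
  induction w with
  | nil => simp [wordEff_nil]
  | cons a w ih =>
      have h1 := abs_letterEff_le a j
      have : wordEff (a :: w) j = letterEff a j + wordEff w j := by
        rw [wordEff_cons]; rfl
      rw [this]
      calc |letterEff a j + wordEff w j| ≤ |letterEff a j| + |wordEff w j| := abs_add_le _ _
        _ ≤ 1 + (w.length : ℤ) := by omega
        _ = ((a :: w).length : ℤ) := by simp; ring

lemma inBox_of_abs {k : ℕ} {x : Fin n → ℤ} (h : ∀ j, |x j| ≤ (k : ℤ)) : inBox k x := by
  intro j
  have := abs_le.mp (h j)
  exact ⟨this.1, this.2⟩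

lemma inBox_zero (k : ℕ) : inBox k (0 : Fin n → ℤ) := by
  intro j
  simp

lemma inBox_wordEff {k : ℕ} {w : List (Sig n)} (h : w.length ≤ k) :
    inBox k (wordEff w) := by
  apply inBox_of_abs
  intro j
  have h1 := abs_wordEff_le w j
  have h2 : (w.length : ℤ) ≤ (k : ℤ) := by exact_mod_cast h
  omega

end AuxBasic
section AuxKReach

variable {n : ℕ}

lemma KReach.box_left {L : LinSet n} {k : ℕ} {x y : Fin n → ℤ} {w : List (Sig n)}
    (h : KReach L k x w y) : inBox k x := by
  cases h with
  | refl _ h => exact h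
  | letter a h h' _ => exact h
  | eps hp h h' _ => exact h

lemma KReach.box_right {L : LinSet n} {k : ℕ} {x y : Fin n → ℤ} {w : List (Sig n)}
    (h : KReach L k x w y) : inBox k y := by
  induction h with
  | refl _ h => exact h
  | letter a h h' _ ih => exact ih
  | eps hp h h' _ ih => exact ih

lemma KReach.append {L : LinSet n} {k : ℕ} {x y z : Fin n → ℤ} {w w' : List (Sig n)}
    (h1 : KReach L k x w y) (h2 : KReach L k y w' z) :
    KReach L k x (w ++ w') z := by
  induction h1 with
  | refl _ h => exact h2
  | letter a h h' _ ih => exact KReach.letter a h h' (ih h2)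
  | eps hp h h' _ ih => exact KReach.eps hp h h' (ih h2)

lemma KReach.drift {L : LinSet n} {k : ℕ} {x y : Fin n → ℤ} {w : List (Sig n)}
    (h : KReach L k x w y) :
    ∃ s ∈ AddSubmonoid.closure L.periods, x + wordEff w = y + s := by
  induction h with
  | refl t h => exact ⟨0, AddSubmonoid.zero_mem _, by simp [wordEff_nil]⟩
  | letter a h h' _ ih =>
      obtain ⟨s, hs, he⟩ := ih
      exact ⟨s, hs, by rw [wordEff_cons, ← he]; abel⟩
  | eps hp h h' _ ih =>
      obtain ⟨s, hs, he⟩ := ih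
      refine ⟨s + _, AddSubmonoid.add_mem _ hs (AddSubmonoid.subset_closure hp), ?_⟩
      rw [← add_assoc, ← he]
      abel

end AuxKReach

section AuxRegular

variable {n : ℕ}

lemma finite_box (n k : ℕ) : {x : Fin n → ℤ | inBox k x}.Finite := by
  have : {x : Fin n → ℤ | inBox k x} ⊆ Set.pi Set.univ (fun _ => Set.Icc (-(k:ℤ)) k) := by
    intro x hx
    intro j _
    exact hx j
  exact Set.Finite.subset (Set.Finite.pi (fun _ => Set.finite_Icc _ _)) this

/-- ε-step relation on box states. -/
def EpsStep (L : LinSet n) (k : ℕ) (z y : {x : Fin n → ℤ // inBox k x}) : Prop :=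
  ∃ p ∈ L.periods, (y : Fin n → ℤ) = (z : Fin n → ℤ) - p

def EpsCl (L : LinSet n) (k : ℕ) : {x : Fin n → ℤ // inBox k x} →
    {x : Fin n → ℤ // inBox k x} → Prop :=
  Relation.ReflTransGen (EpsStep L k)

/-- DFA (powerset construction) for `KApprox L k`. -/
def KDFA (L : LinSet n) (k : ℕ) : DFA (Sig n) (Set {x : Fin n → ℤ // inBox k x}) where
  step := fun S a =>
    {y | ∃ x ∈ S, ∃ z : {x : Fin n → ℤ // inBox k x},
      (z : Fin n → ℤ) = (x : Fin n → ℤ) + letterEff a ∧ EpsCl L k z y}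
  start := {y | ∃ z : {x : Fin n → ℤ // inBox k x}, (z : Fin n → ℤ) = 0 ∧ EpsCl L k z y}
  accept := {S | ∃ y ∈ S, (y : Fin n → ℤ) ∈ L.toSet}

def EpsClosed (L : LinSet n) (k : ℕ) (S : Set {x : Fin n → ℤ // inBox k x}) : Prop :=
  ∀ x ∈ S, ∀ y, EpsCl L k x y → y ∈ S

lemma epsClosed_step (L : LinSet n) (k : ℕ) (S : Set {x : Fin n → ℤ // inBox k x})
    (a : Sig n) : EpsClosed L k ((KDFA L k).step S a) := by
  rintro x ⟨x0, hx0, z, hz, hcl⟩ y hxy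
  exact ⟨x0, hx0, z, hz, Relation.ReflTransGen.trans hcl hxy⟩

lemma epsClosed_start (L : LinSet n) (k : ℕ) : EpsClosed L k (KDFA L k).start := by
  rintro x ⟨z, hz, hcl⟩ y hxy
  exact ⟨z, hz, Relation.ReflTransGen.trans hcl hxy⟩

lemma epsCl_kreach {L : LinSet n} {k : ℕ} {z y : {x : Fin n → ℤ // inBox k x}}
    (h : EpsCl L k z y) {w : List (Sig n)} {t : Fin n → ℤ}
    (h2 : KReach L k (y : Fin n → ℤ) w t) : KReach L k (z : Fin n → ℤ) w t := by
  induction h using Relation.ReflTransGen.head_induction_on with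
  | refl => exact h2
  | head hstep _ ih =>
      rename_i b c _
      obtain ⟨p, hp, he⟩ := hstep
      refine KReach.eps hp b.2 ?_ ?_
      · rw [← he]; exact c.2
      · rw [← he]; exact ih

/-- lifted membership -/
def memv {k : ℕ} (x : Fin n → ℤ) (S : Set {x : Fin n → ℤ // inBox k x}) : Prop :=
  ∃ b ∈ S, (b : Fin n → ℤ) = x

lemma KDFA_fwd {L : LinSet n} {k : ℕ} {x y : Fin n → ℤ} {w : List (Sig n)}
    (h : KReach L k x w y) :
    ∀ S : Set {x : Fin n → ℤ // inBox k x}, EpsClosed L k S → memv x S →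
      memv y ((KDFA L k).evalFrom S w) := by
  induction h with
  | refl t ht => intro S _ hx; exact hx
  | letter a h h' h2 ih =>
      intro S hS hx
      rename_i x0 y0 w0
      show memv y0 ((KDFA L k).evalFrom ((KDFA L k).step S a) w0)
      apply ih ((KDFA L k).step S a) (epsClosed_step L k S a)
      obtain ⟨b, hb, hbe⟩ := hx
      exact ⟨⟨x0 + letterEff a, h'⟩, ⟨b, hb, ⟨x0 + letterEff a, h'⟩,
        by rw [hbe], Relation.ReflTransGen.refl⟩, rfl⟩
  | eps hp h h' h2 ih =>
      intro S hS hx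
      apply ih S hS
      obtain ⟨b, hb, hbe⟩ := hx
      rename_i x0 y0 w0 p
      refine ⟨⟨x0 - p, h'⟩, hS b hb _ ?_, rfl⟩
      exact Relation.ReflTransGen.single ⟨p, hp, by rw [hbe]⟩

lemma KDFA_bwd {L : LinSet n} {k : ℕ} (w : List (Sig n)) :
    ∀ (S : Set {x : Fin n → ℤ // inBox k x}) (y : {x : Fin n → ℤ // inBox k x}),
      y ∈ (KDFA L k).evalFrom S w →
      ∃ x ∈ S, KReach L k (x : Fin n → ℤ) w (y : Fin n → ℤ) := by
  induction w with
  | nil =>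
      intro S y hy
      exact ⟨y, hy, KReach.refl _ y.2⟩
  | cons a w ih =>
      intro S y hy
      obtain ⟨x', hx', hr⟩ := ih ((KDFA L k).step S a) y hy
      obtain ⟨x, hx, z, hz, hcl⟩ := hx'
      refine ⟨x, hx, ?_⟩
      have hz2 : KReach L k (z : Fin n → ℤ) w (y : Fin n → ℤ) := epsCl_kreach hcl hr
      have : KReach L k ((x : Fin n → ℤ) + letterEff a) w (y : Fin n → ℤ) := by
        rw [← hz]; exact hz2
      exact KReach.letter a x.2 (hz ▸ z.2) this

lemma KApprox_isRegular (L : LinSet n) (k : ℕ) : Language.IsRegular (KApprox L k) := by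
  have hfin : Finite {x : Fin n → ℤ // inBox k x} := (finite_box n k).to_subtype
  refine ⟨Set {x : Fin n → ℤ // inBox k x}, Fintype.ofFinite _, KDFA L k, ?_⟩
  ext w
  rw [DFA.mem_accepts]
  constructor
  · rintro hacc
    obtain ⟨y, hy, hyt⟩ := hacc
    obtain ⟨x, hx, hr⟩ := KDFA_bwd w (KDFA L k).start y hy
    obtain ⟨z, hz, hcl⟩ := hx
    refine ⟨y, ?_, hyt⟩
    have : KReach L k (z : Fin n → ℤ) w (y : Fin n → ℤ) := epsCl_kreach hcl hr
    rw [← hz]; exact this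
  · rintro ⟨y, hr, hy⟩
    have h0 : inBox k (0 : Fin n → ℤ) := inBox_zero k
    have hm : memv (0 : Fin n → ℤ) (KDFA L k).start :=
      ⟨⟨0, h0⟩, ⟨⟨0, h0⟩, rfl, Relation.ReflTransGen.refl⟩, rfl⟩
    have := KDFA_fwd hr (KDFA L k).start (epsClosed_start L k) hm
    obtain ⟨b, hb, hbe⟩ := this
    exact ⟨b, hb, by rw [hbe]; exact hy⟩

end AuxRegular
section AuxVisit

variable {n : ℕ} {σ : Type} (M : DFA (Sig n) σ)

/-- set of states visited along the run of `M` on `u`. -/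
def visitSet (u : List (Sig n)) : Set σ :=
  {q | ∃ p, p <+: u ∧ M.eval p = q}

lemma start_mem_visitSet (u : List (Sig n)) : M.start ∈ visitSet M u :=
  ⟨[], List.nil_prefix, rfl⟩

lemma eval_mem_visitSet (u : List (Sig n)) : M.eval u ∈ visitSet M u :=
  ⟨u, List.prefix_refl u, rfl⟩

lemma eval_prefix_mem_visitSet {p u : List (Sig n)} (h : p <+: u) :
    M.eval p ∈ visitSet M u := ⟨p, h, rfl⟩

lemma visitSet_mono {u v : List (Sig n)} (h : u <+: v) :
    visitSet M u ⊆ visitSet M v := by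
  rintro q ⟨p, hp, rfl⟩
  exact ⟨p, hp.trans h, rfl⟩

lemma visitSet_nil : visitSet M ([] : List (Sig n)) = {M.start} := by
  ext q
  constructor
  · rintro ⟨p, hp, rfl⟩
    rw [List.prefix_nil.mp hp]
    rfl
  · rintro rfl
    exact start_mem_visitSet M []

lemma visitSet_snoc (u : List (Sig n)) (a : Sig n) :
    visitSet M (u ++ [a]) = insert (M.eval (u ++ [a])) (visitSet M u) := by
  ext q
  constructor
  · rintro ⟨p, hp, rfl⟩
    rcases List.prefix_concat_iff.mp hp with h | h
    · rw [h]; exact Set.mem_insert _ _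
    · exact Set.mem_insert_of_mem _ ⟨p, h, rfl⟩
  · rintro (rfl | ⟨p, hp, rfl⟩)
    · exact ⟨u ++ [a], List.prefix_refl _, rfl⟩
    · exact ⟨p, hp.trans (List.prefix_append u [a]), rfl⟩

/-- effects of short cycles anchored at states in `T`. -/
def PerSet (K : ℕ) (T : Set σ) : Set (Fin n → ℤ) :=
  {v | ∃ q ∈ T, ∃ c : List (Sig n), c ≠ [] ∧ c.length ≤ K ∧
    M.evalFrom q c = q ∧ wordEff c = v}

lemma PerSet_finite (K : ℕ) (T : Set σ) : (PerSet M K T).Finite := by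
  apply Set.Finite.subset ((List.finite_length_le (Sig n) K).image wordEff)
  rintro v ⟨q, hq, c, hc0, hcl, hcc, rfl⟩
  exact ⟨c, hcl, rfl⟩

lemma PerSet_mono (K : ℕ) {T T' : Set σ} (h : T ⊆ T') :
    PerSet M K T ⊆ PerSet M K T' := by
  rintro v ⟨q, hq, c, h1, h2, h3, h4⟩
  exact ⟨q, h hq, c, h1, h2, h3, h4⟩

/-- the linear set used for covering. -/
def mkLin (K : ℕ) (w₁ : List (Sig n)) (T : Set σ) : LinSet n :=
  ⟨wordEff w₁, PerSet M K T, PerSet_finite M K T⟩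

lemma insert_cycle {x : List (Sig n)} {q : σ} (hq : q ∈ visitSet M x)
    {c : List (Sig n)} (hc : M.evalFrom q c = q) :
    ∃ x', M.eval x' = M.eval x ∧ wordEff x' = wordEff x + wordEff c ∧
      visitSet M x ⊆ visitSet M x' := by
  obtain ⟨p, hp, rfl⟩ := hq
  obtain ⟨r, rfl⟩ := hp
  refine ⟨p ++ c ++ r, ?_, ?_, ?_⟩
  · show M.evalFrom M.start _ = M.evalFrom M.start _
    rw [List.append_assoc, M.evalFrom_of_append, M.evalFrom_of_append, M.evalFrom_of_append]
    exact congrArg (M.evalFrom · r) hc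
  · rw [wordEff_append, wordEff_append, wordEff_append]
    abel
  · rintro s ⟨p', hp', rfl⟩
    by_cases hl : p'.length ≤ p.length
    · have : p' <+: p := List.prefix_of_prefix_length_le hp' (List.prefix_append p r) hl
      exact ⟨p', (this.trans (List.prefix_append p c)).trans
        (List.prefix_append (p ++ c) r), rfl⟩
    · have hpp : p <+: p' :=
        List.prefix_of_prefix_length_le (List.prefix_append p r) hp' (by omega)
      obtain ⟨s', rfl⟩ := hpp
      have hs' : s' <+: r := by
        obtain ⟨t, ht⟩ := hp'
        exact ⟨t, by simpa using ht⟩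
      refine ⟨p ++ c ++ s', by
        rw [List.append_assoc, List.append_assoc]
        exact (List.prefix_append_right_inj p).mpr
          ((List.prefix_append_right_inj c).mpr hs'), ?_⟩
      show M.evalFrom M.start _ = M.evalFrom M.start _
    -- eval (p ++ c ++ s') = eval (p ++ s')
      rw [List.append_assoc, M.evalFrom_of_append, M.evalFrom_of_append,
        M.evalFrom_of_append]
      exact congrArg (M.evalFrom · s') hc

lemma realize_closure {K : ℕ} {T : Set σ} {p : Fin n → ℤ}
    (hp : p ∈ AddSubmonoid.closure (PerSet M K T)) :
    ∀ x : List (Sig n), T ⊆ visitSet M x →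
      ∃ x', M.eval x' = M.eval x ∧ wordEff x' = wordEff x + p ∧ T ⊆ visitSet M x' := by
  induction hp using AddSubmonoid.closure_induction with
  | mem v hv =>
      intro x hx
      obtain ⟨q, hq, c, hc0, hcl, hcc, rfl⟩ := hv
      obtain ⟨x', h1, h2, h3⟩ := insert_cycle M (hx hq) hcc
      exact ⟨x', h1, h2, fun t ht => h3 (hx ht)⟩
  | zero =>
      intro x hx
      exact ⟨x, rfl, by simp, hx⟩
  | add v w hv hw ihv ihw =>
      intro x hx
      obtain ⟨x1, h1, h2, h3⟩ := ihv x hx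
      obtain ⟨x2, g1, g2, g3⟩ := ihw x1 h3
      exact ⟨x2, g1.trans h1, by rw [g2, h2]; abel, g3⟩

end AuxVisit
section AuxStack

variable {n : ℕ} {σ : Type} (M : DFA (Sig n) σ)

/-- letters of a stack -/
def lets (st : List (Sig n × Bool)) : List (Sig n) := st.map Prod.fst

lemma lets_append (a b : List (Sig n × Bool)) : lets (a ++ b) = lets a ++ lets b :=
  List.map_append

lemma lets_length (a : List (Sig n × Bool)) : (lets a).length = a.length :=
  List.length_map _

def GoodStk (st : List (Sig n × Bool)) : Prop :=
  ∀ x y z : List (Sig n × Bool), st = x ++ y ++ z → y ≠ [] →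
    M.eval (lets x) = M.eval (lets (x ++ y)) → ∃ e ∈ y, e.2 = true

def FlagStates (st : List (Sig n × Bool)) : Set σ :=
  {q | ∃ x e z, st = x ++ e :: z ∧ e.2 = true ∧ M.eval (lets x ++ [e.1]) = q}

def FlagDist (st : List (Sig n × Bool)) : Prop :=
  ∀ x e y f z, st = x ++ e :: y ++ f :: z → e.2 = true → f.2 = true →
    M.eval (lets x ++ [e.1]) ≠ M.eval (lets (x ++ e :: y) ++ [f.1])

lemma GoodStk.of_prefix {st r : List (Sig n × Bool)} (h : GoodStk M (st ++ r)) :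
    GoodStk M st := by
  intro x y z hd hy he
  exact h x y (z ++ r) (by rw [hd]; simp) hy he

lemma FlagDist.of_prefix {st r : List (Sig n × Bool)} (h : FlagDist M (st ++ r)) :
    FlagDist M st := by
  intro x e y f z hd he hf
  exact h x e y f (z ++ r) (by rw [hd]; simp) he hf

lemma FlagStates.subset_append (st r : List (Sig n × Bool)) :
    FlagStates M st ⊆ FlagStates M (st ++ r) := by
  rintro q ⟨x, e, z, hd, he, rfl⟩
  exact ⟨x, e, z ++ r, by rw [hd]; simp, he, rfl⟩

lemma zone_short [Fintype σ] (x y z : List (Sig n × Bool))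
    (hG : GoodStk M (x ++ y ++ z)) (hy : ∀ e ∈ y, e.2 = false) :
    y.length + 1 ≤ Fintype.card σ := by
  have hinj : Function.Injective
      (fun i : Fin (y.length + 1) => M.eval (lets (x ++ y.take i))) := by
    have key : ∀ i j : Fin (y.length + 1), (i : ℕ) < (j : ℕ) →
        M.eval (lets (x ++ y.take i)) = M.eval (lets (x ++ y.take j)) → False := by
      intro i j hij heq
      set seg := (y.take j).drop i with hseg
      have hjlen : (j : ℕ) ≤ y.length := by omega
      have hlenseg : seg.length = (j : ℕ) - (i : ℕ) := by
        rw [hseg, List.length_drop, List.length_take, min_eq_left hjlen]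
      have hsegne : seg ≠ [] := by
        have hpos : 0 < seg.length := by
          rw [hlenseg]
          exact Nat.sub_pos_of_lt hij
        exact List.ne_nil_of_length_pos hpos
      have htj : y.take j = y.take i ++ seg := by
        rw [hseg]
        conv_lhs => rw [← List.take_append_drop (i : ℕ) (y.take (j : ℕ))]
        rw [List.take_take, min_eq_left (le_of_lt hij)]
      have hdec : x ++ y ++ z = (x ++ y.take i) ++ seg ++ (y.drop j ++ z) := by
        conv_lhs => rw [← List.take_append_drop (j : ℕ) y]
        rw [htj]
        simp [List.append_assoc]
      have heq2 : M.eval (lets (x ++ y.take i)) =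
          M.eval (lets ((x ++ y.take i) ++ seg)) := by
        rw [List.append_assoc, ← htj]
        exact heq
      obtain ⟨e, he, hfl⟩ := hG (x ++ y.take i) seg (y.drop j ++ z) hdec hsegne heq2
      have : e ∈ y := List.mem_of_mem_take (List.mem_of_mem_drop he)
      rw [hy e this] at hfl
      exact Bool.false_ne_true hfl
    intro i j hij
    by_contra hne
    rcases lt_or_gt_of_ne (fun h : (i:ℕ) = (j:ℕ) => hne (Fin.ext h)) with h | h
    · exact key i j h hij
    · exact key j i h hij.symm
  simpa using Fintype.card_le_of_injective _ hinj

lemma exists_last_flag :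
    ∀ st : List (Sig n × Bool), (∃ e ∈ st, e.2 = true) →
    ∃ x e y, st = x ++ e :: y ∧ e.2 = true ∧ ∀ e' ∈ y, e'.2 = false := by
  intro st
  induction st using List.reverseRecOn with
  | nil => rintro ⟨e, he, _⟩; simp at he
  | append_singleton st a ih =>
      rintro ⟨e, he, hfl⟩
      by_cases ha : a.2 = true
      · exact ⟨st, a, [], rfl, ha, by simp⟩
      · have : e ∈ st := by
          rcases List.mem_append.mp he with h | h
          · exact h
          · simp at h
            rw [h] at hfl
            exact absurd hfl ha
        obtain ⟨x, f, y, hd, hf, hy⟩ := ih ⟨e, this, hfl⟩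
        refine ⟨x, f, y ++ [a], by rw [hd]; simp, hf, ?_⟩
        intro e' he'
        rcases List.mem_append.mp he' with h | h
        · exact hy e' h
        · simp at h
          rw [h]
          exact Bool.eq_false_iff.mpr ha

lemma stack_bound_aux [Fintype σ] :
    ∀ N : ℕ, ∀ st : List (Sig n × Bool), ∀ A : Finset σ, st.length ≤ N →
    GoodStk M st → FlagDist M st → FlagStates M st ⊆ ↑A →
    st.length ≤ (A.card + 1) * Fintype.card σ := by
  intro N
  induction N with
  | zero =>
      intro st A hl _ _ _
      omega
  | succ N ih =>
      intro st A hl hG hF hFS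
      classical
      by_cases hfl : ∃ e ∈ st, e.2 = true
      · obtain ⟨x, e, y, hd, he, hy⟩ := exists_last_flag st hfl
        have hqe : M.eval (lets x ++ [e.1]) ∈ FlagStates M st := ⟨x, e, y, hd, he, rfl⟩
        set qe := M.eval (lets x ++ [e.1]) with hqedef
        have hqeA : qe ∈ A := hFS hqe
        have hGx : GoodStk M x := by
          rw [hd] at hG
          exact (show GoodStk M (x ++ e :: y) from hG).of_prefix M
        have hFx : FlagDist M x := by
          rw [hd] at hF
          exact (show FlagDist M (x ++ e :: y) from hF).of_prefix M
        have hFSx : FlagStates M x ⊆ ↑(A.erase qe) := by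
          rintro q ⟨x', f, z', hx, hf, rfl⟩
          have hqA : M.eval (lets x' ++ [f.1]) ∈ A := by
            apply hFS
            exact ⟨x', f, z' ++ e :: y, by subst hd; subst hx; simp, hf, rfl⟩

          have hne : M.eval (lets x' ++ [f.1]) ≠ qe := by
            have hde : st = x' ++ f :: z' ++ e :: y := by
              subst hd; subst hx; simp
            have := hF x' f z' e y hde hf he
            rw [hqedef, hx]
            exact this
          exact Finset.mem_coe.mpr (Finset.mem_erase.mpr ⟨hne, hqA⟩)
        have hzone : y.length + 1 ≤ Fintype.card σ := by
          have hG2 : GoodStk M ((x ++ [e]) ++ y ++ []) := by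
            have heq : (x ++ [e]) ++ y ++ [] = x ++ e :: y := by simp
            rw [heq, ← hd]
            exact hG
          exact zone_short M (x ++ [e]) y [] hG2 hy
        have hxlen : x.length ≤ N := by
          rw [hd] at hl
          simp at hl
          omega
        have hx := ih x (A.erase qe) hxlen hGx hFx hFSx
        have hcard : (A.erase qe).card + 1 = A.card := by
          rw [Finset.card_erase_of_mem hqeA]
          have : 1 ≤ A.card := Finset.card_pos.mpr ⟨qe, hqeA⟩
          omega
        rw [hd]
        simp only [List.length_append, List.length_cons]
        rw [hcard] at hx
        calc x.length + (y.length + 1) ≤ A.card * Fintype.card σ + Fintype.card σ := by omega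
          _ = (A.card + 1) * Fintype.card σ := by ring
      · push_neg at hfl
        have : st.length + 1 ≤ Fintype.card σ := by
          have hG2 : GoodStk M ([] ++ st ++ []) := by
            have heq : [] ++ st ++ [] = st := by simp
            rw [heq]
            exact hG
          exact zone_short M [] st [] hG2 (fun e he => Bool.eq_false_iff.mpr (hfl e he))
        have h1 : 1 ≤ A.card + 1 := by omega
        calc st.length ≤ Fintype.card σ := by omega
          _ = 1 * Fintype.card σ := by ring
          _ ≤ (A.card + 1) * Fintype.card σ := Nat.mul_le_mul_right _ h1

lemma stack_bound [Fintype σ] (st : List (Sig n × Bool))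
    (hG : GoodStk M st) (hF : FlagDist M st) :
    st.length ≤ (Fintype.card σ + 1) * Fintype.card σ := by
  have := stack_bound_aux M st.length st Finset.univ le_rfl hG hF (by simp)
  simpa using this

end AuxStack
section AuxMain
set_option linter.unusedSectionVars false

variable {n : ℕ} {σ : Type} [Fintype σ] (M : DFA (Sig n) σ)

lemma wordEff_snoc (v : List (Sig n)) (a : Sig n) :
    wordEff (v ++ [a]) = wordEff v + letterEff a := by
  rw [wordEff_append, wordEff_cons, wordEff_nil]
  abel

lemma FlagStates_nil : FlagStates M ([] : List (Sig n × Bool)) = ∅ := by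
  ext q
  simp only [FlagStates, Set.mem_setOf_eq, Set.mem_empty_iff_false, iff_false]
  rintro ⟨x, e, z, hd, _, _⟩
  exact List.cons_ne_nil e z (List.append_eq_nil_iff.mp hd.symm).2

lemma snoc_eq_append {st A B : List (Sig n × Bool)} {e : Sig n × Bool}
    (h : st ++ [e] = A ++ B) (hB : B ≠ []) :
    ∃ B', B = B' ++ [e] ∧ st = A ++ B' := by
  induction B using List.reverseRecOn with
  | nil => exact absurd rfl hB
  | append_singleton B' b _ =>
      rw [← List.append_assoc] at h
      obtain ⟨h1, h2⟩ := List.append_inj' h (by simp)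
      have hb : e = b := (List.cons_eq_cons.mp h2).1
      exact ⟨B', by rw [hb], h1⟩

lemma snoc_eq_append_cons {st x z : List (Sig n × Bool)} {e f : Sig n × Bool}
    (h : st ++ [e] = x ++ f :: z) :
    (z = [] ∧ st = x ∧ f = e) ∨ (∃ z', z = z' ++ [e] ∧ st = x ++ f :: z') := by
  obtain ⟨B', hB, hst⟩ := snoc_eq_append h (List.cons_ne_nil f z)
  cases B' with
  | nil =>
      simp at hB
      exact Or.inl ⟨hB.2, by simpa using hst, hB.1⟩
  | cons b B'' =>
      simp only [List.cons_append, List.cons_eq_cons] at hB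
      obtain ⟨hfb, hzB⟩ := hB
      refine Or.inr ⟨B'', hzB, ?_⟩
      rw [hst, hfb]

/-- invariant of the stack construction -/
def StInv (K : ℕ) (w : List (Sig n)) (st : List (Sig n × Bool)) : Prop :=
  M.eval (lets st) = M.eval w ∧
  GoodStk M st ∧ FlagDist M st ∧
  visitSet M w = insert M.start (FlagStates M st) ∧
  visitSet M (lets st) ⊆ visitSet M w ∧
  (∀ Lin : LinSet n, PerSet M K (visitSet M w) ⊆ Lin.periods →
    KReach Lin K 0 w (wordEff (lets st)))

lemma main_inv {K : ℕ} (hK : K = (Fintype.card σ + 1) * Fintype.card σ + 1)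
    (w : List (Sig n)) : ∃ st, StInv M K w st := by
  induction w using List.reverseRecOn with
  | nil =>
      refine ⟨[], rfl, ?_, ?_, ?_, ?_, ?_⟩
      · intro x y z hd hy _
        exact absurd (List.append_eq_nil_iff.mp (List.append_eq_nil_iff.mp hd.symm).1).2 hy
      · intro x e y f z hd _ _
        exact absurd (List.append_eq_nil_iff.mp hd.symm).2 (List.cons_ne_nil _ _)
      · rw [visitSet_nil, FlagStates_nil]
        simp
      · exact subset_rfl
      · intro Lin _
        have h0 : wordEff (lets ([] : List (Sig n × Bool))) = 0 := rfl
        rw [h0]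
        exact KReach.refl _ (inBox_zero K)
  | append_singleton u a ih =>
      obtain ⟨st, h1, hG, hF, h4a, h4b, h6⟩ := ih
      have hstlen : st.length ≤ K - 1 := by
        rw [hK]; simpa using stack_bound M st hG hF
      have hKpos : 1 ≤ K := by rw [hK]; omega
      have hletslen : (lets st).length = st.length := lets_length st
      set q' := M.eval (u ++ [a]) with hq'def
      have heval' : M.eval (lets st ++ [a]) = q' := by
        rw [hq'def, M.eval_append_singleton, M.eval_append_singleton, h1]
      have hvsnoc : visitSet M (u ++ [a]) = insert q' (visitSet M u) :=
        visitSet_snoc M u a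
      have hvmono : visitSet M u ⊆ visitSet M (u ++ [a]) :=
        visitSet_mono M (List.prefix_append u [a])
      have hFSsub : FlagStates M st ⊆ visitSet M u := by
        rw [h4a]; exact Set.subset_insert _ _
      have hbox1 : inBox K (wordEff (lets st)) := by
        apply inBox_wordEff; omega
      have hbox2 : inBox K (wordEff (lets st ++ [a])) := by
        apply inBox_wordEff
        simp only [List.length_append, List.length_cons, List.length_nil, hletslen]
        omega
      have hpush : ∀ Lin : LinSet n, PerSet M K (visitSet M (u ++ [a])) ⊆ Lin.periods →
          KReach Lin K 0 (u ++ [a]) (wordEff (lets st ++ [a])) := by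
        intro Lin hper
        have hold := h6 Lin (le_trans (PerSet_mono M K hvmono) hper)
        have hb2 : inBox K (wordEff (lets st) + letterEff a) := by
          rw [← wordEff_snoc]; exact hbox2
        rw [wordEff_snoc]
        exact hold.append (KReach.letter a hbox1 hb2 (KReach.refl _ hb2))
      by_cases hq : q' ∈ visitSet M u
      · -- q' already visited: unflagged entry
        have hletse : lets (st ++ [(a, false)]) = lets st ++ [a] := by
          rw [lets_append]; rfl
        have hFSe : FlagStates M (st ++ [(a, false)]) = FlagStates M st := by
          ext q
          constructor
          · rintro ⟨x, f, z, hd, hf, rfl⟩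
            rcases snoc_eq_append_cons hd with ⟨hz, hst, hfe⟩ | ⟨z', hz', hst⟩
            · rw [hfe] at hf
              simp at hf
            · exact ⟨x, f, z', hst, hf, rfl⟩
          · intro hq2
            exact FlagStates.subset_append M st [(a, false)] hq2
        have h4a' : visitSet M (u ++ [a]) = insert M.start (FlagStates M st) := by
          rw [hvsnoc, Set.insert_eq_of_mem hq, h4a]
        by_cases hGood : GoodStk M (st ++ [(a, false)])
        · -- case 2a : no pop
          refine ⟨st ++ [(a, false)], ?_, hGood, ?_, ?_, ?_, ?_⟩
          · rw [hletse, heval']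
          · intro x f1 y f2 z hd hf1 hf2
            have hd2 : st ++ [(a, false)] = (x ++ f1 :: y) ++ f2 :: z := by
              simp [hd]
            rcases snoc_eq_append_cons hd2 with ⟨hz, hst, hfe⟩ | ⟨z', hz', hst⟩
            · rw [hfe] at hf2
              simp at hf2
            · have hst' : st = x ++ f1 :: y ++ f2 :: z' := by simp [hst]
              exact hF x f1 y f2 z' hst' hf1 hf2
          · rw [h4a', hFSe]
          · rw [hletse, visitSet_snoc M (lets st) a, heval', hvsnoc]
            exact Set.insert_subset_insert h4b
          · intro Lin hper
            rw [hletse]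
            exact hpush Lin hper
        · -- case 2b : pop
          have hng := hGood
          simp only [GoodStk] at hng
          push_neg at hng
          obtain ⟨x, y, z, hd, hy, he', hz⟩ := hng
          have hz0 : z = [] := by
            by_contra hzne
            have hd2 : st ++ [(a, false)] = (x ++ y) ++ z := by simp [hd]
            obtain ⟨z', hz', hst⟩ := snoc_eq_append hd2 hzne
            obtain ⟨ee, hee, heefl⟩ := hG x y z' (by simp [hst]) hy he'
            exact (hz ee hee) heefl
          rw [hz0, List.append_nil] at hd
          obtain ⟨y', hy', hst⟩ := snoc_eq_append hd hy
          have hxpre : x <+: st := ⟨y', hst.symm⟩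
          have hxlen : x.length ≤ st.length := hxpre.length_le
          have hq'' : M.eval (lets x) = q' := by
            rw [he', ← hd, hletse, heval']
          have hFSx : FlagStates M x = FlagStates M st := by
            apply Set.Subset.antisymm
            · have hsub := FlagStates.subset_append M x y'
              rw [← hst] at hsub
              exact hsub
            · rintro q ⟨x0, f, z0, hd0, hf, rfl⟩
              by_cases hlen : x0.length + 1 ≤ x.length
              · have px0f : x0 ++ [f] <+: st := ⟨z0, by rw [hd0]; simp⟩
                have hpx : x0 ++ [f] <+: x :=
                  List.prefix_of_prefix_length_le px0f hxpre (by simpa using hlen)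
                obtain ⟨t, ht⟩ := hpx
                refine ⟨x0, f, t, ?_, hf, rfl⟩
                rw [← ht]; simp
              · have px0 : x0 <+: st := ⟨f :: z0, hd0.symm⟩
                have hpx : x <+: x0 :=
                  List.prefix_of_prefix_length_le hxpre px0 (by omega)
                obtain ⟨t, ht⟩ := hpx
                have h5 : x ++ y' = x ++ (t ++ f :: z0) := by
                  rw [← hst, hd0, ← ht, List.append_assoc]
                have h6' : y' = t ++ f :: z0 := List.append_cancel_left h5
                have hfy : f ∈ y := by
                  rw [hy']
                  exact List.mem_append_left _
                    (by rw [h6']; exact List.mem_append_right _ List.mem_cons_self)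
                exact absurd hf (hz f hfy)
          have hGx : GoodStk M x := by
            have hq1 : GoodStk M (x ++ y') := by rw [← hst]; exact hG
            exact hq1.of_prefix M
          have hFx : FlagDist M x := by
            have hq1 : FlagDist M (x ++ y') := by rw [← hst]; exact hF
            exact hq1.of_prefix M
          refine ⟨x, ?_, hGx, hFx, ?_, ?_, ?_⟩
          · rw [← hq'def]; exact hq''
          · rw [h4a', hFSx]
          · have hpfx : lets x <+: lets st := List.IsPrefix.map Prod.fst hxpre
            exact (visitSet_mono M hpfx).trans (h4b.trans hvmono)
          · intro Lin hper
            have base := hpush Lin hper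
            have hylen : y.length ≤ K := by
              have hlen2 := congrArg List.length hd
              simp at hlen2
              omega
            have h7 : M.eval (lets x ++ lets y) = q' := by
              rw [← lets_append, ← hd, hletse, heval']
            have hcyc : M.evalFrom q' (lets y) = q' := by
              conv_lhs => rw [← hq'']
              show M.evalFrom (M.evalFrom M.start (lets x)) (lets y) = q'
              rw [← M.evalFrom_of_append]
              exact h7
            have hp : wordEff (lets y) ∈ PerSet M K (visitSet M (u ++ [a])) := by
              refine ⟨q', ?_, lets y, ?_, ?_, hcyc, rfl⟩
              · rw [hq'def]; exact eval_mem_visitSet M (u ++ [a])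
              · intro hc
                exact hy (List.map_eq_nil_iff.mp hc)
              · rw [lets_length]
                exact hylen
            have h8 : lets st ++ [a] = lets x ++ lets y := by
              rw [← hletse, hd, lets_append]
            have hsub : wordEff (lets st ++ [a]) - wordEff (lets y) = wordEff (lets x) := by
              rw [h8, wordEff_append, add_sub_cancel_right]
            have bx : inBox K (wordEff (lets x)) := by
              apply inBox_wordEff
              rw [lets_length]
              omega
            have heps : KReach Lin K (wordEff (lets st ++ [a])) [] (wordEff (lets x)) := by
              apply KReach.eps (hper hp) hbox2
              · rw [hsub]; exact bx
              · rw [hsub]; exact KReach.refl _ bx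
            have := base.append heps
            simpa using this
      · -- q' new : flagged entry
        have hletse : lets (st ++ [(a, true)]) = lets st ++ [a] := by
          rw [lets_append]; rfl
        have hGood : GoodStk M (st ++ [(a, true)]) := by
          intro x y z hd hy he'
          by_cases hz : z = []
          · subst hz
            rw [List.append_nil] at hd
            obtain ⟨y', hy', hst⟩ := snoc_eq_append hd hy
            exact ⟨(a, true), by
              rw [hy']; exact List.mem_append_right _ (List.mem_singleton_self _), rfl⟩
          · have hd2 : st ++ [(a, true)] = (x ++ y) ++ z := by simp [hd]
            obtain ⟨z', hz', hst⟩ := snoc_eq_append hd2 hz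
            exact hG x y z' (by simp [hst]) hy he'
        have hFD : FlagDist M (st ++ [(a, true)]) := by
          intro x f1 y f2 z hd hf1 hf2
          have hd2 : st ++ [(a, true)] = (x ++ f1 :: y) ++ f2 :: z := by
            simp [hd]
          rcases snoc_eq_append_cons hd2 with ⟨hz, hst, hfe⟩ | ⟨z', hz', hst⟩
          · intro hcon
            apply hq
            have hL : M.eval (lets x ++ [f1.1]) ∈ FlagStates M st :=
              ⟨x, f1, y, hst, hf1, rfl⟩
            have hR : M.eval (lets (x ++ f1 :: y) ++ [f2.1]) = q' := by
              rw [← hst, hfe]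
              exact heval'
            rw [← hR, ← hcon]
            exact hFSsub hL
          · have hst' : st = x ++ f1 :: y ++ f2 :: z' := by simp [hst]
            exact hF x f1 y f2 z' hst' hf1 hf2
        have hFSe : FlagStates M (st ++ [(a, true)]) = insert q' (FlagStates M st) := by
          ext q
          constructor
          · rintro ⟨x, f, z, hd, hf, rfl⟩
            rcases snoc_eq_append_cons hd with ⟨hz, hst, hfe⟩ | ⟨z', hz', hst⟩
            · left
              rw [← hst, hfe]
              exact heval'
            · exact Or.inr ⟨x, f, z', hst, hf, rfl⟩
          · rintro (rfl | ⟨x, f, z, hd, hf, rfl⟩)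
            · exact ⟨st, (a, true), [], rfl, rfl, heval'⟩
            · exact FlagStates.subset_append M st _ ⟨x, f, z, hd, hf, rfl⟩
        refine ⟨st ++ [(a, true)], ?_, hGood, hFD, ?_, ?_, ?_⟩
        · rw [hletse, heval']
        · rw [hvsnoc, h4a, hFSe, Set.insert_comm]
        · rw [hletse, visitSet_snoc M (lets st) a, heval', hvsnoc]
          exact Set.insert_subset_insert h4b
        · intro Lin hper
          rw [hletse]
          exact hpush Lin hper

end AuxMain
theorem stmt11 (n : ℕ) (hn : 1 ≤ n) : IsBasicSepSet (ZDyck n) (RFam n 1) := by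
  constructor
  · -- every member of R_1 is regular and disjoint from Z-Dyck
    rintro K ⟨k, Ls, hlen, h0, rfl⟩
    obtain ⟨L1, rfl⟩ := List.length_eq_one_iff.mp hlen
    have hprod : ((([L1].map (fun L => KApprox L k)) : List (Language (Sig n)))).prod
        = KApprox L1 k := by simp
    rw [hprod]
    have h0' : (0 : Fin n → ℤ) ∉ L1.toSet := h0
    constructor
    · exact KApprox_isRegular L1 k
    · intro w hw hwz
      obtain ⟨y, hr, hy⟩ := hw
      obtain ⟨s, hs, hdr⟩ := hr.drift
      obtain ⟨p, hp, hyb⟩ := hy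
      apply h0'
      refine ⟨p + s, AddSubmonoid.add_mem _ hp hs, ?_⟩
      have hwe : wordEff w = 0 := hwz
      have hz : (0 : Fin n → ℤ) = y + s := by
        rw [← hdr, hwe]; simp
      rw [hyb] at hz
      rw [hz, add_assoc]
  · -- covering property
    intro L hreg hdisj
    obtain ⟨σ, instF, M, hM⟩ := hreg
    set K := (Fintype.card σ + 1) * Fintype.card σ + 1 with hKdef
    refine ⟨(fun pr : List (Sig n) × Set σ => KApprox (mkLin M K pr.1 pr.2) K) ''
      {pr | pr.1.length ≤ K ∧ (0 : Fin n → ℤ) ∉ (mkLin M K pr.1 pr.2).toSet},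
      ?_, ?_, ?_⟩
    · rintro Kl ⟨⟨w1, S⟩, ⟨hlen, h0⟩, rfl⟩
      exact ⟨K, [mkLin M K w1 S], rfl, h0, by simp⟩
    · apply Set.Finite.image
      apply Set.Finite.subset
        (Set.Finite.prod (List.finite_length_le (Sig n) K) Set.finite_univ)
      rintro ⟨w1, S⟩ ⟨hl, _⟩
      exact ⟨hl, Set.mem_univ _⟩
    · intro w hw
      obtain ⟨st, hi1, hiG, hiF, hi4a, hi4b, hi6⟩ := main_inv M hKdef w
      set w1 := lets st with hw1
      have hlen : w1.length ≤ K := by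
        rw [hw1, lets_length]
        have := stack_bound M st hiG hiF
        omega
      have hS1 : visitSet M w ⊆ visitSet M w1 := by
        rw [hi4a]
        intro q hq
        rcases Set.mem_insert_iff.mp hq with rfl | hq2
        · exact start_mem_visitSet M w1
        · obtain ⟨x, e, z, hd, hf, rfl⟩ := hq2
          refine ⟨lets x ++ [e.1], ?_, rfl⟩
          rw [hw1, hd, lets_append]
          exact ⟨lets z, by simp [lets]⟩
      have hacc : M.eval w ∈ M.accept := by
        have : w ∈ M.accepts := by rw [hM]; exact hw
        exact this
      have h0 : (0 : Fin n → ℤ) ∉ (mkLin M K w1 (visitSet M w)).toSet := by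
        rintro ⟨p, hp, h0eq⟩
        obtain ⟨x', he', hwe', hvs'⟩ := realize_closure M hp w1 hS1
        have hx'L : x' ∈ L := by
          rw [← hM]
          show M.eval x' ∈ M.accept
          rw [he', hw1, hi1]
          exact hacc
        apply hdisj x' hx'L
        show wordEff x' = 0
        rw [hwe']
        exact h0eq.symm
      refine ⟨KApprox (mkLin M K w1 (visitSet M w)) K, ⟨(w1, visitSet M w), ⟨hlen, h0⟩, rfl⟩, ?_⟩
      refine ⟨wordEff w1, ?_, ?_⟩
      · exact hi6 (mkLin M K w1 (visitSet M w)) subset_rfl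
      · exact ⟨0, AddSubmonoid.zero_mem _, by simp [mkLin]⟩
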